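/- arXiv:1908.00710 — 5 statements merged into one kernel-verified Lean document; each statement's English description precedes it below -/
import Mathlib

section
/- Let λ3 and λ4 be real numbers with λ4 > λ3². With ξ1, ξ2, p1, p2 defined by ξ2 = λ3/2 + √(λ4 − 3λ3²/4), ξ1 = λ3/2 − √(λ4 − 3λ3²/4), p1 = 1/(ξ1(ξ1 − ξ2)), p2 = −1/(ξ2(ξ1 − ξ2)), one has p1·ξ1³ + p2·ξ2³ = λ3. -/
theorem hong_third_moment_matching (lam3 lam4 xi1 xi2 p1 p2 : ℝ) (h : lam4 > lam3 ^ 2)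
    (hxi2 : xi2 = lam3 / 2 + Real.sqrt (lam4 - 3 * lam3 ^ 2 / 4))
    (hxi1 : xi1 = lam3 / 2 - Real.sqrt (lam4 - 3 * lam3 ^ 2 / 4))
    (hp1 : p1 = 1 / (xi1 * (xi1 - xi2)))
    (hp2 : p2 = -1 / (xi2 * (xi1 - xi2))) :
    p1 * xi1 ^ 3 + p2 * xi2 ^ 3 = lam3 := by
  set s := Real.sqrt (lam4 - 3 * lam3 ^ 2 / 4) with hs
  have harg : lam4 - 3 * lam3 ^ 2 / 4 > lam3 ^ 2 / 4 := by nlinarith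
  have hsq : s ^ 2 = lam4 - 3 * lam3 ^ 2 / 4 := by
    rw [hs, Real.sq_sqrt]; nlinarith [sq_nonneg lam3]
  have hsgt : s > |lam3| / 2 := by
    have h0 : (0:ℝ) ≤ |lam3| / 2 := by positivity
    nlinarith [sq_abs lam3, Real.sqrt_nonneg (lam4 - 3 * lam3 ^ 2 / 4)]
  have habs := abs_le.mp (le_of_lt (by linarith [hsgt] : |lam3| < 2 * s))
  have hx2 : xi2 > 0 := by rw [hxi2]; nlinarith [habs.1]
  have hx1 : xi1 < 0 := by rw [hxi1]; nlinarith [habs.2]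
  have hd : xi1 - xi2 = -2 * s := by rw [hxi1, hxi2]; ring
  have hsne : s > 0 := lt_of_le_of_lt (by positivity) hsgt
  have h1 : xi1 ≠ 0 := ne_of_lt hx1
  have h2 : xi2 ≠ 0 := ne_of_gt hx2
  have h3 : xi1 - xi2 ≠ 0 := by rw [hd]; nlinarith
  rw [hp1, hp2]
  field_simp
  rw [hxi1, hxi2]
  nlinarith [hsq]
end

section
/- Let λ3 and λ4 be real numbers with λ4 > λ3². With ξ1, ξ2, p1, p2 defined by ξ2 = λ3/2 + √(λ4 − 3λ3²/4), ξ1 = λ3/2 − √(λ4 − 3λ3²/4), p1 = 1/(ξ1(ξ1 − ξ2)), p2 = −1/(ξ2(ξ1 − ξ2)), one has p1·ξ1⁴ + p2·ξ2⁴ = λ4. -/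
theorem hong_fourth_moment_matching (lam3 lam4 xi1 xi2 p1 p2 : ℝ) (h : lam4 > lam3 ^ 2)
    (hxi2 : xi2 = lam3 / 2 + Real.sqrt (lam4 - 3 * lam3 ^ 2 / 4))
    (hxi1 : xi1 = lam3 / 2 - Real.sqrt (lam4 - 3 * lam3 ^ 2 / 4))
    (hp1 : p1 = 1 / (xi1 * (xi1 - xi2)))
    (hp2 : p2 = -1 / (xi2 * (xi1 - xi2))) :
    p1 * xi1 ^ 4 + p2 * xi2 ^ 4 = lam4 := by
  set s := Real.sqrt (lam4 - 3 * lam3 ^ 2 / 4) with hs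
  have harg : lam4 - 3 * lam3 ^ 2 / 4 > 0 := by nlinarith [sq_nonneg lam3]
  have hs2 : s ^ 2 = lam4 - 3 * lam3 ^ 2 / 4 := Real.sq_sqrt harg.le
  have hspos : 0 < s := Real.sqrt_pos.mpr harg
  have hprod : xi1 * xi2 = lam3 ^ 2 - lam4 := by
    rw [hxi1, hxi2]; nlinarith [hs2]
  have h1 : xi1 ≠ 0 := by
    intro h0; rw [h0] at hprod; simp at hprod; nlinarith
  have h2 : xi2 ≠ 0 := by
    intro h0; rw [h0] at hprod; simp at hprod; nlinarith
  have hd : xi1 - xi2 ≠ 0 := by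
    rw [hxi1, hxi2]; intro h0; nlinarith
  subst hp1 hp2
  field_simp
  rw [hxi1, hxi2] at *
  have hl4 : lam4 = s ^ 2 + 3 * lam3 ^ 2 / 4 := by linarith
  rw [hl4]; ring
end

section
/- Let λ3 and λ4 be real numbers with λ4 > λ3², and define p3 = 1 − p1 − p2 with p1 = 1/(ξ1(ξ1 − ξ2)), p2 = −1/(ξ2(ξ1 − ξ2)), ξ2 = λ3/2 + √(λ4 − 3λ3²/4), ξ1 = λ3/2 − √(λ4 − 3λ3²/4). Then p3 ≥ 0 if and only if λ4 ≥ λ3² + 1. -/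
theorem hong_mean_weight_nonneg_iff (lam3 lam4 xi1 xi2 p1 p2 p3 : ℝ) (h : lam4 > lam3 ^ 2)
    (hxi2 : xi2 = lam3 / 2 + Real.sqrt (lam4 - 3 * lam3 ^ 2 / 4))
    (hxi1 : xi1 = lam3 / 2 - Real.sqrt (lam4 - 3 * lam3 ^ 2 / 4))
    (hp1 : p1 = 1 / (xi1 * (xi1 - xi2)))
    (hp2 : p2 = -1 / (xi2 * (xi1 - xi2)))
    (hp3 : p3 = 1 - p1 - p2) :
    0 ≤ p3 ↔ lam4 ≥ lam3 ^ 2 + 1 := by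
  set s := Real.sqrt (lam4 - 3 * lam3 ^ 2 / 4) with hs
  have hpos : (0:ℝ) < lam4 - 3 * lam3 ^ 2 / 4 := by nlinarith [sq_nonneg lam3]
  have hs2 : s ^ 2 = lam4 - 3 * lam3 ^ 2 / 4 := Real.sq_sqrt hpos.le
  have hprod : xi1 * xi2 = lam3 ^ 2 - lam4 := by
    subst hxi1 hxi2; nlinarith [hs2]
  have hxi1ne : xi1 ≠ 0 := by
    intro h0; rw [h0] at hprod; simp at hprod; nlinarith
  have hxi2ne : xi2 ≠ 0 := by
    intro h0; rw [h0] at hprod; simp at hprod; nlinarith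
  have hsne : s ≠ 0 := by positivity
  have hdiff : xi1 - xi2 ≠ 0 := by
    rw [hxi1, hxi2]; intro h0; apply hsne; linarith
  have hd : (0:ℝ) < lam4 - lam3 ^ 2 := by linarith
  have hsum : p1 + p2 = -1 / (xi1 * xi2) := by
    rw [hp1, hp2]; field_simp; ring
  have hp3' : p3 = 1 - 1 / (lam4 - lam3 ^ 2) := by
    rw [hp3, sub_sub, hsum, hprod]
    rw [show lam3 ^ 2 - lam4 = -(lam4 - lam3 ^ 2) by ring, div_neg, neg_div]
    ring
  rw [hp3']
  constructor
  · intro h1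
    have h2 : 1 / (lam4 - lam3 ^ 2) ≤ 1 := by linarith
    rw [div_le_one hd] at h2; linarith
  · intro h1
    have : 1 / (lam4 - lam3 ^ 2) ≤ 1 := by
      rw [div_le_one hd]; linarith
    linarith
end

section
/- Suppose the real numbers ξ1 < ξ2, p1 and p2 satisfy the four moment-matching equations p1·ξ1 + p2·ξ2 = 0, p1·ξ1² + p2·ξ2² = 1, p1·ξ1³ + p2·ξ2³ = λ3 and p1·ξ1⁴ + p2·ξ2⁴ = λ4 for given real numbers λ3 and λ4 with λ4 > λ3². Then necessarily ξ2 = λ3/2 + √(λ4 − 3λ3²/4), ξ1 = λ3/2 − √(λ4 − 3λ3²/4), p1 = 1/(ξ1(ξ1 − ξ2)) and p2 = −1/(ξ2(ξ1 − ξ2)). -/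
theorem hong_solution_unique (lam3 lam4 xi1 xi2 p1 p2 : ℝ)
    (h : lam4 > lam3 ^ 2) (hlt : xi1 < xi2)
    (h1 : p1 * xi1 + p2 * xi2 = 0)
    (h2 : p1 * xi1 ^ 2 + p2 * xi2 ^ 2 = 1)
    (h3 : p1 * xi1 ^ 3 + p2 * xi2 ^ 3 = lam3)
    (h4 : p1 * xi1 ^ 4 + p2 * xi2 ^ 4 = lam4) :
    xi2 = lam3 / 2 + Real.sqrt (lam4 - 3 * lam3 ^ 2 / 4) ∧
    xi1 = lam3 / 2 - Real.sqrt (lam4 - 3 * lam3 ^ 2 / 4) ∧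
    p1 = 1 / (xi1 * (xi1 - xi2)) ∧
    p2 = -1 / (xi2 * (xi1 - xi2)) := by
  have hs : xi1 + xi2 = lam3 := by
    linear_combination h3 + xi1 * xi2 * h1 - (xi1 + xi2) * h2
  have hq : xi1 * xi2 = lam3 ^ 2 - lam4 := by
    linear_combination lam3 * hs + (xi1 + xi2) * h3 - xi1 * xi2 * h2 - h4
  have hqneg : xi1 * xi2 < 0 := by nlinarith
  have hx1 : xi1 < 0 := by nlinarith
  have hx2 : 0 < xi2 := by nlinarith
  set r := Real.sqrt (lam4 - 3 * lam3 ^ 2 / 4) with hrdef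
  have harg : (0:ℝ) ≤ lam4 - 3 * lam3 ^ 2 / 4 := by nlinarith
  have hr2 : r ^ 2 = lam4 - 3 * lam3 ^ 2 / 4 := Real.sq_sqrt harg
  have hrnn : 0 ≤ r := Real.sqrt_nonneg _
  have hdiff : xi2 - xi1 = 2 * r := by
    have h5 : (xi2 - xi1) ^ 2 = (2 * r) ^ 2 := by nlinarith
    have := Real.sqrt_sq (by linarith : (0:ℝ) ≤ xi2 - xi1)
    have := Real.sqrt_sq (by linarith : (0:ℝ) ≤ 2 * r)
    nlinarith [sq_nonneg (xi2 - xi1 - 2 * r), sq_nonneg (xi2 - xi1 + 2 * r)]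
  have hx1ne : xi1 ≠ 0 := ne_of_lt hx1
  have hx2ne : xi2 ≠ 0 := ne_of_gt hx2
  have hdne : xi1 - xi2 ≠ 0 := by linarith
  refine ⟨by linarith, by linarith, ?_, ?_⟩
  · field_simp
    linear_combination h2 - xi2 * h1
  · field_simp
    linear_combination xi1 * h1 - h2
end

section
/- Let X be a real-valued random variable on a probability space with E[X⁴] < ∞ and strictly positive variance; set μ = E[X], σ = √(Var X), λ3 = E[(X − μ)³]/σ³, λ4 = E[(X − μ)⁴]/σ⁴, ξ2 = λ3/2 + √(λ4 − 3λ3²/4), ξ1 = λ3/2 − √(λ4 − 3λ3²/4), p1 = 1/(ξ1(ξ1 − ξ2)), p2 = −1/(ξ2(ξ1 − ξ2)), p3 = 1 − p1 − p2. Then for every real polynomial h of degree at most 4, p1·h(μ + ξ1σ) + p2·h(μ + ξ2σ) + p3·h(μ) = E[h(X)]. -/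
open MeasureTheory ProbabilityTheory

set_option maxHeartbeats 2000000 in
theorem hong_three_point_exact_on_deg_le_four
    {Ω : Type*} [MeasureSpace Ω] [IsProbabilityMeasure (ℙ : Measure Ω)]
    (X : Ω → ℝ) (hX : MemLp X 4)
    (hvar : 0 < variance X ℙ)
    (m s lam3 lam4 xi1 xi2 p1 p2 p3 : ℝ)
    (hm : m = ∫ ω, X ω)
    (hs : s = Real.sqrt (variance X ℙ))
    (hlam3 : lam3 = (∫ ω, (X ω - m) ^ 3) / s ^ 3)
    (hlam4 : lam4 = (∫ ω, (X ω - m) ^ 4) / s ^ 4)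
    (hxi2 : xi2 = lam3 / 2 + Real.sqrt (lam4 - 3 * lam3 ^ 2 / 4))
    (hxi1 : xi1 = lam3 / 2 - Real.sqrt (lam4 - 3 * lam3 ^ 2 / 4))
    (hp1 : p1 = 1 / (xi1 * (xi1 - xi2)))
    (hp2 : p2 = -1 / (xi2 * (xi1 - xi2)))
    (hp3 : p3 = 1 - p1 - p2) :
    ∀ h : Polynomial ℝ, h.degree ≤ 4 →
      p1 * h.eval (m + xi1 * s) + p2 * h.eval (m + xi2 * s) + p3 * h.eval m
        = ∫ ω, h.eval (X ω) := by
  -- basic positivity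
  have hs0 : 0 < s := hs ▸ Real.sqrt_pos.mpr hvar
  have hsne : s ≠ 0 := ne_of_gt hs0
  -- integrability of centered powers
  have hXint : Integrable X ℙ := hX.integrable (by norm_num)
  have hY4 : MemLp (fun ω => X ω - m) 4 ℙ := hX.sub (memLp_const m)
  have hYm : AEStronglyMeasurable (fun ω => X ω - m) ℙ := hY4.aestronglyMeasurable
  have hI4 : Integrable (fun ω => (X ω - m) ^ 4) ℙ := by
    have h4 := hY4.integrable_norm_rpow (by norm_num) (by norm_num)
    refine h4.congr (Filter.Eventually.of_forall fun ω => ?_)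
    simp only [Real.norm_eq_abs, ENNReal.toReal_ofNat]
    rw [show ((4 : ℝ)) = ((4 : ℕ) : ℝ) by norm_num, Real.rpow_natCast, pow_abs,
      abs_of_nonneg (by positivity)]
  have hI : ∀ k : ℕ, k ≤ 4 → Integrable (fun ω => (X ω - m) ^ k) ℙ := by
    intro k hk
    refine (hI4.add (integrable_const 1)).mono (hYm.pow k) ?_
    refine Filter.Eventually.of_forall fun ω => ?_
    simp only [Pi.add_apply, Real.norm_eq_abs, abs_pow]
    have h2 : (X ω - m) ^ 4 = |X ω - m| ^ 4 := by
      rw [pow_abs, abs_of_nonneg (by positivity)]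
    rw [abs_of_nonneg (by positivity : (0:ℝ) ≤ (X ω - m) ^ 4 + 1), h2]
    rcases le_total (|X ω - m|) 1 with hle | hle
    · have : |X ω - m| ^ k ≤ 1 := pow_le_one₀ (abs_nonneg _) hle
      nlinarith [pow_nonneg (abs_nonneg (X ω - m)) 4]
    · have : |X ω - m| ^ k ≤ |X ω - m| ^ 4 := pow_le_pow_right₀ hle hk
      linarith
  -- moments
  have hM0 : (∫ ω, (X ω - m) ^ 0) = 1 := by
    simp [measure_univ]
  have hM1 : (∫ ω, (X ω - m) ^ 1) = 0 := by
    simp only [pow_one]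
    rw [integral_sub hXint (integrable_const m), integral_const, probReal_univ]
    simp [hm]
  have hvareq : variance X ℙ = ∫ ω, (X ω - m) ^ 2 := by
    have h2 : MemLp X 2 ℙ := hX.mono_exponent (by norm_num)
    rw [variance_eq_integral h2.aestronglyMeasurable.aemeasurable]
    congr 1
    funext ω
    simp [hm]
  have hM2 : (∫ ω, (X ω - m) ^ 2) = s ^ 2 := by
    rw [← hvareq, hs, Real.sq_sqrt (variance_nonneg _ _)]
  have hM3 : (∫ ω, (X ω - m) ^ 3) = lam3 * s ^ 3 := by
    rw [hlam3]; field_simp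
  have hM4 : (∫ ω, (X ω - m) ^ 4) = lam4 * s ^ 4 := by
    rw [hlam4]; field_simp
  -- kurtosis inequality : lam3^2 + 1 ≤ lam4
  have hkurt : lam3 ^ 2 + 1 ≤ lam4 := by
    set a : ℝ := lam3 * s with ha
    have key : 0 ≤ ∫ ω, ((X ω - m) ^ 2 - a * (X ω - m) - s ^ 2) ^ 2 :=
      integral_nonneg fun ω => sq_nonneg _
    have hexp : (fun ω => ((X ω - m) ^ 2 - a * (X ω - m) - s ^ 2) ^ 2)
        = fun ω => (X ω - m) ^ 4 + (-(2 * a)) * (X ω - m) ^ 3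
            + (a ^ 2 - 2 * s ^ 2) * (X ω - m) ^ 2 + (2 * a * s ^ 2) * (X ω - m) ^ 1
            + s ^ 4 := by
      funext ω; ring
    rw [hexp] at key
    have i3 : Integrable (fun ω => (-(2 * a)) * (X ω - m) ^ 3) ℙ :=
      (hI 3 (by norm_num)).const_mul _
    have i2 : Integrable (fun ω => (a ^ 2 - 2 * s ^ 2) * (X ω - m) ^ 2) ℙ :=
      (hI 2 (by norm_num)).const_mul _
    have i1 : Integrable (fun ω => (2 * a * s ^ 2) * (X ω - m) ^ 1) ℙ :=
      (hI 1 (by norm_num)).const_mul _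
    have i43 : Integrable (fun ω => (X ω - m) ^ 4 + (-(2 * a)) * (X ω - m) ^ 3) ℙ := hI4.add i3
    have i432 : Integrable (fun ω => (X ω - m) ^ 4 + (-(2 * a)) * (X ω - m) ^ 3
        + (a ^ 2 - 2 * s ^ 2) * (X ω - m) ^ 2) ℙ := i43.add i2
    have i4321 : Integrable (fun ω => (X ω - m) ^ 4 + (-(2 * a)) * (X ω - m) ^ 3
        + (a ^ 2 - 2 * s ^ 2) * (X ω - m) ^ 2 + (2 * a * s ^ 2) * (X ω - m) ^ 1) ℙ := i432.add i1
    rw [integral_add i4321 (integrable_const _),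
      integral_add i432 i1,
      integral_add i43 i2, integral_add hI4 i3,
      integral_const_mul, integral_const_mul, integral_const_mul,
      integral_const, probReal_univ, hM1, hM2, hM3, hM4] at key
    simp only [smul_eq_mul, one_mul, mul_zero, add_zero] at key
    have h2 : 0 ≤ (lam4 - lam3 ^ 2 - 1) * s ^ 4 := by
      have heq : lam4 * s ^ 4 + -(2 * a) * (lam3 * s ^ 3) + (a ^ 2 - 2 * s ^ 2) * s ^ 2 + s ^ 4
          = (lam4 - lam3 ^ 2 - 1) * s ^ 4 := by rw [ha]; ring
      linarith [heq ▸ key]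
    have hs4 : (0:ℝ) < s ^ 4 := by positivity
    nlinarith [h2, hs4]
  -- structure of xi's
  have hDsq : Real.sqrt (lam4 - 3 * lam3 ^ 2 / 4) ^ 2 = lam4 - 3 * lam3 ^ 2 / 4 :=
    Real.sq_sqrt (by linarith [sq_nonneg lam3])
  have hsum : xi1 + xi2 = lam3 := by rw [hxi1, hxi2]; ring
  have hprod : xi1 * xi2 = lam3 ^ 2 - lam4 := by
    rw [hxi1, hxi2]; nlinarith [hDsq]
  have hprodneg : xi1 * xi2 < 0 := by rw [hprod]; linarith
  have hxi1ne : xi1 ≠ 0 := fun h => by simp [h] at hprodneg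
  have hxi2ne : xi2 ≠ 0 := fun h => by simp [h] at hprodneg
  have hdiffne : xi1 - xi2 ≠ 0 := by
    intro h
    have : xi1 = xi2 := by linarith [sub_eq_zero.mp h]
    rw [this] at hprodneg
    nlinarith [sq_nonneg xi2]
  -- moment matching identities
  have hp1' : p1 * (xi1 * (xi1 - xi2)) = 1 := by
    rw [hp1]; field_simp
  have hp2' : p2 * (xi2 * (xi1 - xi2)) = -1 := by
    rw [hp2]; field_simp
  have hd : xi1 * xi2 * (xi1 - xi2) ≠ 0 := mul_ne_zero (mul_ne_zero hxi1ne hxi2ne) hdiffne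
  have e1 : p1 * xi1 + p2 * xi2 = 0 := by
    apply mul_right_cancel₀ hd
    linear_combination (xi1 * xi2) * hp1' + (xi1 * xi2) * hp2'
  have e2 : p1 * xi1 ^ 2 + p2 * xi2 ^ 2 = 1 := by
    apply mul_right_cancel₀ hd
    linear_combination (xi1 ^ 2 * xi2) * hp1' + (xi1 * xi2 ^ 2) * hp2'
  have e3 : p1 * xi1 ^ 3 + p2 * xi2 ^ 3 = lam3 := by
    apply mul_right_cancel₀ hd
    linear_combination (xi1 ^ 3 * xi2) * hp1' + (xi1 * xi2 ^ 3) * hp2'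
      + (xi1 * xi2 * (xi1 - xi2)) * hsum
  have e4 : p1 * xi1 ^ 4 + p2 * xi2 ^ 4 = lam4 := by
    apply mul_right_cancel₀ hd
    linear_combination (xi1 ^ 4 * xi2) * hp1' + (xi1 * xi2 ^ 4) * hp2'
      + (xi1 * xi2 * (xi1 - xi2) * (xi1 + xi2 + lam3)) * hsum
      - (xi1 * xi2 * (xi1 - xi2)) * hprod
  -- main reduction
  intro h hdeg
  set g : Polynomial ℝ := h.comp (Polynomial.X + Polynomial.C m) with hg
  have hgdeg : g.natDegree < 5 := by
    have h1 : h.natDegree ≤ 4 := Polynomial.natDegree_le_iff_degree_le.mpr hdeg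
    have : g.natDegree = h.natDegree * (Polynomial.X + Polynomial.C m).natDegree :=
      Polynomial.natDegree_comp
    rw [this, Polynomial.natDegree_X_add_C, mul_one]
    omega
  have hgev : ∀ x : ℝ, h.eval x = ∑ k ∈ Finset.range 5, g.coeff k * (x - m) ^ k := by
    intro x
    have : g.eval (x - m) = h.eval x := by
      rw [hg, Polynomial.eval_comp]
      simp
    rw [← this, Polynomial.eval_eq_sum_range' hgdeg]
  have hRHS : (∫ ω, h.eval (X ω))
      = ∑ k ∈ Finset.range 5, g.coeff k * ∫ ω, (X ω - m) ^ k := by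
    calc (∫ ω, h.eval (X ω))
        = ∫ ω, ∑ k ∈ Finset.range 5, g.coeff k * (X ω - m) ^ k := by
          congr 1; funext ω; exact hgev (X ω)
      _ = ∑ k ∈ Finset.range 5, ∫ ω, g.coeff k * (X ω - m) ^ k := by
          refine integral_finset_sum _ fun k hk => ?_
          exact ((hI k (by simpa using Nat.lt_succ_iff.mp (Finset.mem_range.mp hk))).const_mul _)
      _ = ∑ k ∈ Finset.range 5, g.coeff k * ∫ ω, (X ω - m) ^ k := by
          simp [integral_const_mul]
  rw [hRHS, hgev (m + xi1 * s), hgev (m + xi2 * s), hgev m,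
    Finset.mul_sum, Finset.mul_sum, Finset.mul_sum,
    ← Finset.sum_add_distrib, ← Finset.sum_add_distrib]
  refine Finset.sum_congr rfl fun k hk => ?_
  have hk5 : k < 5 := Finset.mem_range.mp hk
  simp only [add_sub_cancel_left, sub_self]
  interval_cases k
  · rw [hM0]; linear_combination (g.coeff 0) * hp3
  · rw [hM1]; linear_combination (g.coeff 1 * s) * e1
  · rw [hM2]; linear_combination (g.coeff 2 * s ^ 2) * e2
  · rw [hM3]; linear_combination (g.coeff 3 * s ^ 3) * e3
  · rw [hM4]; linear_combination (g.coeff 4 * s ^ 4) * e4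
end
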